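/- Let A_{ij} = Σₐ c_{ia} c_{ja} with the m×n matrix c of rank m (so A is invertible), and set k = Σ_{i,j}(A⁻¹)^{ij}. Then the point x̄ᵃ = (1/k) Σ_{i,j} cᵢᵃ (A⁻¹)^{ij}, (ȳⁱ)² = ((k-1)/k²) Σⱼ (A⁻¹)^{ij} satisfies the critical-point equations: c_{ia} x̄ᵃ = (x̄)² for every i, Σᵢ c_{ia}(ȳⁱ)² = x̄ₐ (ȳ)², and (x̄)² + (ȳ)² = 1, provided k ≠ 0. -/

import Mathlib

open Matrix

/-- For `A = c cᵀ` the Gram matrix of an `m×n` matrix `c` of rank `m`, with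
`k = Σᵢⱼ (A⁻¹)ᵢⱼ ≠ 0`, the point `x̄ᵃ = (1/k) Σᵢⱼ cᵢᵃ (A⁻¹)ᵢⱼ`,
`(ȳⁱ)² = ((k-1)/k²) Σⱼ (A⁻¹)ᵢⱼ` satisfies the critical-point equations. -/
theorem stmt_7 (m n : ℕ) (c : Matrix (Fin m) (Fin n) ℝ)
    (hrank : c.rank = m)
    (A : Matrix (Fin m) (Fin m) ℝ) (hA : A = c * cᵀ)
    (k : ℝ) (hk : k = ∑ i, ∑ j, A⁻¹ i j) (hk0 : k ≠ 0)
    (xb : Fin n → ℝ) (hxb : ∀ a, xb a = (1 / k) * ∑ i, ∑ j, c i a * A⁻¹ i j)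
    (ybsq : Fin m → ℝ) (hybsq : ∀ i, ybsq i = ((k - 1) / k ^ 2) * ∑ j, A⁻¹ i j) :
    (∀ i, ∑ a, c i a * xb a = ∑ a, xb a * xb a) ∧
    (∀ a, ∑ i, c i a * ybsq i = xb a * ∑ i, ybsq i) ∧
    (∑ a, xb a * xb a) + (∑ i, ybsq i) = 1 := by
  -- A is invertible
  have hArank : A.rank = m := by
    rw [hA, Matrix.rank_self_mul_transpose, hrank]
  have hunit : IsUnit A := by
    rw [← Matrix.mulVec_surjective_iff_isUnit]
    have htop : LinearMap.range A.mulVecLin = ⊤ := by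
      apply Submodule.eq_top_of_finrank_eq
      rw [← Matrix.rank, hArank, Module.finrank_fintype_fun_eq_card, Fintype.card_fin]
    intro y
    have := htop ▸ Submodule.mem_top (x := y) (R := ℝ)
    obtain ⟨v, hv⟩ := LinearMap.mem_range.mp this
    exact ⟨v, hv⟩
  have hdet : IsUnit A.det := A.isUnit_iff_isUnit_det.mp hunit
  -- vector formulation
  set u : Fin m → ℝ := fun _ => 1 with hu
  set v : Fin m → ℝ := A⁻¹ *ᵥ u with hv
  have hvi : ∀ i, v i = ∑ j, A⁻¹ i j := by
    intro i; simp [hv, Matrix.mulVec, dotProduct, hu]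
  have hkv : k = ∑ i, v i := by simp [hk, hvi]
  have hAv : A *ᵥ v = u := by
    rw [hv, Matrix.mulVec_mulVec, Matrix.mul_nonsing_inv _ hdet, Matrix.one_mulVec]
  have hxb' : ∀ a, xb a = (1 / k) * (cᵀ *ᵥ v) a := by
    intro a
    rw [hxb]
    congr 1
    simp [Matrix.mulVec, dotProduct, Matrix.transpose_apply, hvi, Finset.mul_sum]
  -- c *ᵥ (cᵀ *ᵥ v) = u
  have hccv : c *ᵥ (cᵀ *ᵥ v) = u := by
    rw [Matrix.mulVec_mulVec, ← hA, hAv]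
  -- first family: ∑ a, c i a * xb a = 1/k
  have h1 : ∀ i, ∑ a, c i a * xb a = 1 / k := by
    intro i
    have : ∑ a, c i a * xb a = (1 / k) * (c *ᵥ (cᵀ *ᵥ v)) i := by
      simp only [hxb', Matrix.mulVec, dotProduct]
      rw [Finset.mul_sum]
      apply Finset.sum_congr rfl
      intro a _
      ring
    rw [this, hccv]; simp [hu]
  -- ∑ a, xb a * xb a = 1/k
  have h2 : ∑ a, xb a * xb a = 1 / k := by
    have hx : ∑ a, xb a * xb a = (1 / k) * ∑ a, (cᵀ *ᵥ v) a * xb a := by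
      rw [Finset.mul_sum]
      apply Finset.sum_congr rfl
      intro a _
      rw [hxb' a]; ring
    rw [hx]
    have : ∑ a, (cᵀ *ᵥ v) a * xb a = ∑ i, v i * ((1:ℝ)/k) * u i := by
      have : ∑ a, (cᵀ *ᵥ v) a * xb a = ∑ a, xb a * (cᵀ *ᵥ v) a := by
        apply Finset.sum_congr rfl; intro a _; ring
      rw [this]
      have hdp : xb ⬝ᵥ (cᵀ *ᵥ v) = (xb ᵥ* cᵀ) ⬝ᵥ v := Matrix.dotProduct_mulVec xb cᵀ v
      have h3 : ∀ i, (xb ᵥ* cᵀ) i = (1/k) * u i := by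
        intro i
        have : (xb ᵥ* cᵀ) i = ∑ a, xb a * c i a := by
          simp [Matrix.vecMul, dotProduct, Matrix.transpose_apply]
        rw [this]
        have : ∑ a, xb a * c i a = ∑ a, c i a * xb a := by
          apply Finset.sum_congr rfl; intro a _; ring
        rw [this, h1 i]; simp [hu]
      calc ∑ a, xb a * (cᵀ *ᵥ v) a = xb ⬝ᵥ (cᵀ *ᵥ v) := rfl
        _ = (xb ᵥ* cᵀ) ⬝ᵥ v := hdp
        _ = ∑ i, ((1:ℝ)/k * u i) * v i := by
            apply Finset.sum_congr rfl; intro i _; rw [h3 i]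
        _ = ∑ i, v i * ((1:ℝ)/k) * u i := by
            apply Finset.sum_congr rfl; intro i _; ring
    rw [this]
    simp only [hu]
    have : ∑ i, v i * ((1:ℝ)/k) * 1 = (1/k) * ∑ i, v i := by
      rw [Finset.mul_sum]; apply Finset.sum_congr rfl; intro i _; ring
    rw [this, ← hkv]
    field_simp
  -- ∑ i, ybsq i = (k-1)/k
  have hys : ∑ i, ybsq i = (k - 1) / k := by
    have : ∑ i, ybsq i = ((k - 1) / k ^ 2) * ∑ i, v i := by
      rw [Finset.mul_sum]
      apply Finset.sum_congr rfl
      intro i _; rw [hybsq i, hvi i]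
    rw [this, ← hkv]
    field_simp
  refine ⟨fun i => by rw [h1 i, h2], ?_, ?_⟩
  · intro a
    have hl : ∑ i, c i a * ybsq i = ((k - 1) / k ^ 2) * ∑ i, ∑ j, c i a * A⁻¹ i j := by
      simp only [hybsq, Finset.mul_sum]
      apply Finset.sum_congr rfl
      intro i _
      apply Finset.sum_congr rfl
      intro j _
      ring
    rw [hl, hys, hxb a]
    have hx0 : ∑ i, ∑ j, c i a * A⁻¹ i j = k * xb a := by
      rw [hxb a]; field_simp
    rw [hx0]
    field_simp
  · rw [h2, hys]
    field_simp
    ring
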